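/- Let x, y ∈ {0,1}^n with f_m(x) ≠ f_m(y) for some m ∈ {1,2}, and let m̄ = 3−m be the other objective. If b is minimal such that f_m^B(x_{B_b}) ≠ f_m^B(y_{B_b}), then f_{m̄}^B(x_{B_b}) ≠ f_{m̄}^B(y_{B_b}), and b is also minimal with respect to the property f_{m̄}^B(x_{B_b}) ≠ f_{m̄}^B(y_{B_b}). -/
import Mathlib


/-- Number of leading positions on which `x` agrees with the target string `z`. -/
def LO (ℓ : ℕ) (z x : Fin ℓ → Bool) : ℕ :=
  (Finset.univ.filter (fun i : Fin ℓ => ∀ j ≤ i, x j = z j)).card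

/-- The all-ones target string `z¹ = 1^ℓ`. -/
def zOne (ℓ : ℕ) : Fin ℓ → Bool := fun _ => true

/-- The target string `z² = 1^{ℓ-r} 0^r`. -/
def zTwo (ℓ r : ℕ) : Fin ℓ → Bool := fun i => decide (i.val < ℓ - r)

/-- The first base function `f₁^B(w) = (ℓ+1)·LO_{z¹}(w) + LO_{z²}(w)`. -/
def f1B (ℓ r : ℕ) (w : Fin ℓ → Bool) : ℕ :=
  (ℓ + 1) * LO ℓ (zOne ℓ) w + LO ℓ (zTwo ℓ r) w

/-- The second base function `f₂^B(w) = (ℓ+1)·LO_{z²}(w) + LO_{z¹}(w)`. -/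
def f2B (ℓ r : ℕ) (w : Fin ℓ → Bool) : ℕ :=
  (ℓ + 1) * LO ℓ (zTwo ℓ r) w + LO ℓ (zOne ℓ) w

/-- The base functions indexed by `m : Fin 2` (`0` for `f₁^B`, `1` for `f₂^B`). -/
def fB (ℓ r : ℕ) (m : Fin 2) : (Fin ℓ → Bool) → ℕ :=
  if m = 0 then f1B ℓ r else f2B ℓ r

/-- The `b`-th block (0-based) of a bitstring of length `n = k·ℓ`. -/
def blockOf (k ℓ : ℕ) (x : Fin (k * ℓ) → Bool) (b : Fin k) : Fin ℓ → Bool :=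
  fun j => x ⟨b.val * ℓ + j.val, by
    calc b.val * ℓ + j.val < b.val * ℓ + ℓ := Nat.add_lt_add_left j.isLt _
      _ = (b.val + 1) * ℓ := by ring
      _ ≤ k * ℓ := Nat.mul_le_mul_right ℓ b.isLt⟩

/-- The full objective `f_m(x) = Σ_b (ℓ+1)^{2(k-b)} f_m^B(x_{B_b})` (with 0-based
block index `b`, so the paper's exponent `2(k-b)` becomes `2(k-1-b)`). -/
def fObj (k ℓ r : ℕ) (m : Fin 2) (x : Fin (k * ℓ) → Bool) : ℕ :=
  ∑ b : Fin k, (ℓ + 1) ^ (2 * (k - 1 - b.val)) * fB ℓ r m (blockOf k ℓ x b)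


lemma LO_le (ℓ : ℕ) (z x : Fin ℓ → Bool) : LO ℓ z x ≤ ℓ := by
  calc LO ℓ z x ≤ (Finset.univ : Finset (Fin ℓ)).card := Finset.card_filter_le _ _
    _ = ℓ := by simp

lemma unique_decomp (ℓ a c a' c' : ℕ) (hc : c ≤ ℓ) (hc' : c' ≤ ℓ)
    (h : (ℓ+1)*a + c = (ℓ+1)*a' + c') : a = a' ∧ c = c' := by
  have h1 : ((ℓ+1)*a + c) / (ℓ+1) = a := by
    rw [Nat.mul_add_div (by omega), Nat.div_eq_of_lt (by omega)]; omega
  have h2 : ((ℓ+1)*a' + c') / (ℓ+1) = a' := by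
    rw [Nat.mul_add_div (by omega), Nat.div_eq_of_lt (by omega)]; omega
  have : a = a' := by rw [← h1, ← h2, h]
  constructor
  · exact this
  · subst this; omega

lemma f1B_eq_iff (ℓ r : ℕ) (u v : Fin ℓ → Bool) :
    f1B ℓ r u = f1B ℓ r v ↔ f2B ℓ r u = f2B ℓ r v := by
  unfold f1B f2B
  constructor
  · intro h
    obtain ⟨h1, h2⟩ := unique_decomp ℓ _ _ _ _ (LO_le _ _ _) (LO_le _ _ _) h
    rw [h1, h2]
  · intro h
    obtain ⟨h1, h2⟩ := unique_decomp ℓ _ _ _ _ (LO_le _ _ _) (LO_le _ _ _) h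
    rw [h1, h2]

lemma fB_eq_iff (ℓ r : ℕ) (m mbar : Fin 2) (hmm : mbar ≠ m) (u v : Fin ℓ → Bool) :
    fB ℓ r m u = fB ℓ r m v ↔ fB ℓ r mbar u = fB ℓ r mbar v := by
  fin_cases m <;> fin_cases mbar <;> simp_all [fB] <;>
    [exact (f1B_eq_iff ℓ r u v); exact (f1B_eq_iff ℓ r u v).symm]

/-- If `f_m(x) ≠ f_m(y)` and `b` is minimal with
`f_m^B(x_{B_b}) ≠ f_m^B(y_{B_b})`, then for the other objective `m̄ ≠ m` we also
have `f_{m̄}^B(x_{B_b}) ≠ f_{m̄}^B(y_{B_b})`, and `b` is minimal with this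
property as well. -/
theorem stmt_8 (k ℓ r : ℕ) (hk : 0 < k) (hℓ : 0 < ℓ) (hr : r ≤ ℓ)
    (x y : Fin (k * ℓ) → Bool) (m : Fin 2)
    (hne : fObj k ℓ r m x ≠ fObj k ℓ r m y)
    (b : Fin k)
    (hb : fB ℓ r m (blockOf k ℓ x b) ≠ fB ℓ r m (blockOf k ℓ y b))
    (hbmin : ∀ c : Fin k, c < b → fB ℓ r m (blockOf k ℓ x c) = fB ℓ r m (blockOf k ℓ y c)) :
    ∀ mbar : Fin 2, mbar ≠ m →
      fB ℓ r mbar (blockOf k ℓ x b) ≠ fB ℓ r mbar (blockOf k ℓ y b) ∧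
      (∀ c : Fin k, c < b →
        fB ℓ r mbar (blockOf k ℓ x c) = fB ℓ r mbar (blockOf k ℓ y c)) := by
  intro mbar hmm
  constructor
  · intro h
    exact hb ((fB_eq_iff ℓ r m mbar hmm _ _).mpr h)
  · intro c hc
    exact (fB_eq_iff ℓ r m mbar hmm _ _).mp (hbmin c hc)
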